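/- For every P in ℂ[x_1,x_2,…][λ_1,…,λ_r,μ_1,…,μ_r], one has Φ^−_λ(z)(Ψ_μ(w)·P) − Ψ_μ(w)·Φ^−_λ(z)(P) = F(z,w;λ,μ)·P, where F(z,w;λ,μ) := (1/(2κ))·∑_{1≤p,q≤r} binom(p+q, p)·((−1)^{p+1}/(p+q))·λ_p·μ_q·∑_{m≥0} binom(p+q+m−1, m)·w^m·z^{−(p+q+m)} is the expansion of f_κ(z−w;λ,μ) in the domain |z| > |w|. That is, the commutator of the annihilation part of the coherent-state field at z with the creation part at w is scalar multiplication by f_κ(z−w;λ,μ) expanded in positive powers of w/z. -/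

import Mathlib

/-!
STATEMENT 10.
Fix r ≥ 1 and κ ≠ 0.  Work in R := ℂ[x_1,x_2,…][λ_1,…,λ_r,μ_1,…,μ_r]
(= `MvPolynomial (ℕ ⊕ (Fin r ⊕ Fin r)) ℂ`, with `Sum.inl i` = x_{i+1},
`Sum.inr (Sum.inl p)` = λ_{p+1}, `Sum.inr (Sum.inr q)` = μ_{q+1}).
For m ≥ 1, a_m := 2κm·∂/∂x_m.  The annihilation part of the coherent-state
field at z is given coefficientwise by `PhiMinus` (coefficient of `z^e`):
  Φ^−_λ(z)P := (1/(2κ))·∑_{n=1}^r (λ_n/n)·∑_{m≥1} (−1)^{n−1}·C(m+n−1,n−1)·z^{−m−n}·(a_m P).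
The creation part at w is the formal power series in w (coefficient of
`w^t` given by `Psi`):
  Ψ_μ(w) := (1/(2κ))·∑_{q=1}^r (μ_q/q)·∑_{m≥q} C(m−1,q−1)·x_m·w^{m−q},
acting by multiplication.  Then for every P and every w-exponent t ≥ 0 and
z-exponent e ∈ ℤ,
  Φ^−_λ(z)(Ψ_μ(w)·P) − Ψ_μ(w)·Φ^−_λ(z)(P) = F(z,w;λ,μ)·P,
where F(z,w;λ,μ) := (1/(2κ))·∑_{1≤p,q≤r} C(p+q,p)·((−1)^{p+1}/(p+q))·λ_p·μ_q·
    ∑_{m≥0} C(p+q+m−1,m)·w^m·z^{−(p+q+m)}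
is the expansion of f_κ(z−w;λ,μ) in the domain |z|>|w| (coefficient of
`w^t z^e` given by `Fc`).
-/

noncomputable section

abbrev R' (r : ℕ) : Type := MvPolynomial (ℕ ⊕ (Fin r ⊕ Fin r)) ℂ

/-- `a_m := 2κ m ∂/∂x_m` (for m ≥ 1; gives 0 at m = 0). -/
def aR (r : ℕ) (κ : ℂ) (m : ℕ) (P : R' r) : R' r :=
  (2 * κ * (m : ℂ)) • MvPolynomial.pderiv (Sum.inl (m - 1)) P

/-- The coefficient of `z^e` in `Φ^−_λ(z)P`. -/
def PhiMinus (r : ℕ) (κ : ℂ) (P : R' r) (e : ℤ) : R' r :=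
  ∑ n : Fin r,
    if e ≤ -(((n : ℕ) : ℤ) + 2) then
      ((1 / (2 * κ)) * (1 / (((n : ℕ) : ℂ) + 1)) * (-1 : ℂ) ^ ((n : ℕ)) *
          (Nat.choose (((-e).toNat - ((n : ℕ) + 1)) + (n : ℕ)) ((n : ℕ)) : ℂ)) •
        (MvPolynomial.X (Sum.inr (Sum.inl n)) *
          aR r κ ((-e).toNat - ((n : ℕ) + 1)) P)
    else 0

/-- The coefficient of `w^t` in `Ψ_μ(w)`: for `q : Fin r` (math index
`(q:ℕ)+1`), the term with `w^{m−(q+1)} = w^t` has `m = t+(q:ℕ)+1`, so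
`x_m = X (Sum.inl (t+(q:ℕ)))` and `C(m−1, q) = C(t+(q:ℕ), (q:ℕ))`. -/
def Psi (r : ℕ) (κ : ℂ) (t : ℕ) : R' r :=
  ∑ q : Fin r,
    MvPolynomial.C
        ((1 / (2 * κ * (((q : ℕ) : ℂ) + 1))) * (Nat.choose (t + (q : ℕ)) (q : ℕ) : ℂ))
      * MvPolynomial.X (Sum.inr (Sum.inr q)) * MvPolynomial.X (Sum.inl (t + (q : ℕ)))

/-- The coefficient of `w^t z^e` in `F(z,w;λ,μ)`, the expansion of
`f_κ(z−w;λ,μ)` for |z|>|w|. -/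
def Fc (r : ℕ) (κ : ℂ) (t : ℕ) (e : ℤ) : R' r :=
  ∑ p : Fin r, ∑ q : Fin r,
    if ((p : ℕ) + (q : ℕ) + 2 + t : ℤ) = -e then
      MvPolynomial.C
        ((1 / (2 * κ)) * (Nat.choose ((p : ℕ) + (q : ℕ) + 2) ((p : ℕ) + 1) : ℂ) *
          (-1 : ℂ) ^ ((p : ℕ) + 2) / (((p : ℕ) : ℂ) + ((q : ℕ) : ℂ) + 2) *
          (Nat.choose ((p : ℕ) + (q : ℕ) + 1 + t) t : ℂ))
        * MvPolynomial.X (Sum.inr (Sum.inl p)) * MvPolynomial.X (Sum.inr (Sum.inr q))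
    else 0

open Nat in
lemma choose_key (n q t : ℕ) :
    ((q+t+1 : ℕ) : ℂ) * (Nat.choose (n+q+t+1) n : ℂ) * (Nat.choose (t+q) q : ℂ) * ((n+q+2 : ℕ) : ℂ)
      = (Nat.choose (n+q+2) (n+1) : ℂ) * (Nat.choose (n+q+t+1) t : ℂ) * ((n+1 : ℕ):ℂ) * ((q+1:ℕ):ℂ) := by
  have h1 : n ≤ n+q+t+1 := by omega
  have h2 : q ≤ t+q := by omega
  have h3 : n+1 ≤ n+q+2 := by omega
  have h4 : t ≤ n+q+t+1 := by omega
  rw [Nat.cast_choose ℂ h1, Nat.cast_choose ℂ h2, Nat.cast_choose ℂ h3, Nat.cast_choose ℂ h4]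
  have s1 : n+q+t+1-n = q+t+1 := by omega
  have s2 : t+q-q = t := by omega
  have s3 : n+q+2-(n+1) = q+1 := by omega
  have s4 : n+q+t+1-t = n+q+1 := by omega
  rw [s1, s2, s3, s4]
  have f1 : (q+t+1)! = (q+t+1) * (q+t)! := Nat.factorial_succ _
  have f2 : (n+q+2)! = (n+q+2) * (n+q+1)! := Nat.factorial_succ _
  have f3 : (n+1)! = (n+1) * n ! := Nat.factorial_succ _
  have f4 : (q+1)! = (q+1) * q ! := Nat.factorial_succ _
  have g1 : t+q = q+t := by omega
  rw [f1, f2, f3, f4, g1]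
  have ne : ∀ k : ℕ, ((k ! : ℕ) : ℂ) ≠ 0 := fun k => Nat.cast_ne_zero.2 (Nat.factorial_ne_zero k)
  have e1 := ne n; have e2 := ne q; have e3 := ne t; have e4 := ne (q+t); have e5 := ne (n+q+1)
  have p1 : (((q+t+1:ℕ)):ℂ) ≠ 0 := Nat.cast_ne_zero.2 (by omega)
  have p2 : (((n+1:ℕ)):ℂ) ≠ 0 := Nat.cast_ne_zero.2 (by omega)
  have p3 : (((q+1:ℕ)):ℂ) ≠ 0 := Nat.cast_ne_zero.2 (by omega)
  have p4 : (((n+q+2:ℕ)):ℂ) ≠ 0 := Nat.cast_ne_zero.2 (by omega)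
  push_cast at p1 p2 p3 p4 ⊢
  field_simp

lemma pderiv_Psi (r : ℕ) (κ : ℂ) (t : ℕ) (k : ℕ) :
    MvPolynomial.pderiv (Sum.inl k : ℕ ⊕ (Fin r ⊕ Fin r)) (Psi r κ t)
      = ∑ q : Fin r, if t + (q : ℕ) = k then
          MvPolynomial.C
            ((1 / (2 * κ * (((q : ℕ) : ℂ) + 1))) * (Nat.choose (t + (q : ℕ)) (q : ℕ) : ℂ))
          * MvPolynomial.X (Sum.inr (Sum.inr q)) else 0 := by
  classical
  unfold Psi
  rw [map_sum]
  refine Finset.sum_congr rfl fun q _ => ?_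
  rw [MvPolynomial.pderiv_mul, MvPolynomial.pderiv_mul, MvPolynomial.pderiv_C,
    MvPolynomial.pderiv_X_of_ne (by simp), MvPolynomial.pderiv_X]
  simp only [Pi.single_apply, Sum.inl.injEq, zero_mul, mul_zero, add_zero, zero_add,
    mul_ite, mul_one]

theorem statement10 (r : ℕ) (hr : 1 ≤ r) (κ : ℂ) (hκ : κ ≠ 0) (P : R' r)
    (t : ℕ) (e : ℤ) :
    PhiMinus r κ (Psi r κ t * P) e - Psi r κ t * PhiMinus r κ P e
      = Fc r κ t e * P := by
  classical
  unfold PhiMinus Fc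
  rw [Finset.mul_sum, ← Finset.sum_sub_distrib, Finset.sum_mul]
  refine Finset.sum_congr rfl fun n _ => ?_
  rw [Finset.sum_mul]
  by_cases h : e ≤ -(((n : ℕ) : ℤ) + 2)
  · rw [if_pos h, if_pos h]
    have hN : (((-e).toNat : ℤ)) = -e := Int.toNat_of_nonneg (by omega)
    set N := (-e).toNat with hNdef
    have hN2 : (n : ℕ) + 2 ≤ N := by omega
    have hm1 : N - ((n : ℕ) + 1) - 1 = N - ((n : ℕ) + 2) := by omega
    unfold aR
    rw [hm1, MvPolynomial.smul_eq_C_mul, MvPolynomial.smul_eq_C_mul,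
      MvPolynomial.smul_eq_C_mul, MvPolynomial.smul_eq_C_mul, MvPolynomial.pderiv_mul]
    set s : ℂ := (1 / (2 * κ)) * (1 / (((n : ℕ) : ℂ) + 1)) * (-1 : ℂ) ^ ((n : ℕ)) *
          (Nat.choose ((N - ((n : ℕ) + 1)) + (n : ℕ)) ((n : ℕ)) : ℂ) with hs
    set b : ℂ := 2 * κ * ((N - ((n : ℕ) + 1) : ℕ) : ℂ) with hb
    calc MvPolynomial.C s * (MvPolynomial.X (Sum.inr (Sum.inl n)) *
            (MvPolynomial.C b * (MvPolynomial.pderiv (Sum.inl (N - ((n : ℕ) + 2))) (Psi r κ t) * P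
              + Psi r κ t * MvPolynomial.pderiv (Sum.inl (N - ((n : ℕ) + 2))) P)))
          - Psi r κ t * (MvPolynomial.C s * (MvPolynomial.X (Sum.inr (Sum.inl n)) *
            (MvPolynomial.C b * MvPolynomial.pderiv (Sum.inl (N - ((n : ℕ) + 2))) P)))
        = MvPolynomial.C s * (MvPolynomial.C b * (MvPolynomial.X (Sum.inr (Sum.inl n)) *
            (MvPolynomial.pderiv (Sum.inl (N - ((n : ℕ) + 2))) (Psi r κ t) * P))) := by ring
      _ = _ := ?_
    rw [pderiv_Psi, Finset.sum_mul, Finset.mul_sum, Finset.mul_sum, Finset.mul_sum]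
    refine Finset.sum_congr rfl fun q _ => ?_
    by_cases hc : t + (q : ℕ) = N - ((n : ℕ) + 2)
    · rw [if_pos hc, if_pos (by push_cast; omega)]
      have r1 : N - ((n : ℕ) + 1) + (n : ℕ) = (n : ℕ) + (q : ℕ) + t + 1 := by omega
      have r2 : N - ((n : ℕ) + 1) = (q : ℕ) + t + 1 := by omega
      have r3 : (n : ℕ) + (q : ℕ) + 1 + t = (n : ℕ) + (q : ℕ) + t + 1 := by omega
      rw [hs, hb, r1, r2, r3]
      have p2 : (((n:ℕ):ℂ)+1) ≠ 0 := by
        have := Nat.cast_ne_zero (R := ℂ) (n := (n:ℕ)+1) |>.2 (by omega); push_cast at this; exact this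
      have p3 : (((q:ℕ):ℂ)+1) ≠ 0 := by
        have := Nat.cast_ne_zero (R := ℂ) (n := (q:ℕ)+1) |>.2 (by omega); push_cast at this; exact this
      have p4 : (((n:ℕ):ℂ)+((q:ℕ):ℂ)+2) ≠ 0 := by
        have := Nat.cast_ne_zero (R := ℂ) (n := (n:ℕ)+(q:ℕ)+2) |>.2 (by omega); push_cast at this
        exact this
      have hg : (1 / (2 * κ) * (Nat.choose ((n:ℕ)+(q:ℕ)+2) ((n:ℕ)+1) : ℂ) * (-1:ℂ)^((n:ℕ)+2)
            / (((n:ℕ):ℂ)+((q:ℕ):ℂ)+2) * (Nat.choose ((n:ℕ)+(q:ℕ)+t+1) t : ℂ))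
          = (1 / (2 * κ) * (1 / (((n:ℕ):ℂ)+1)) * (-1:ℂ)^((n:ℕ))
              * (Nat.choose ((n:ℕ)+(q:ℕ)+t+1) (n:ℕ) : ℂ))
            * (2 * κ * ((((q:ℕ)+t+1 : ℕ)):ℂ))
            * (1 / (2 * κ * (((q:ℕ):ℂ)+1)) * (Nat.choose (t+(q:ℕ)) (q:ℕ) : ℂ)) := by
        have key := choose_key (n:ℕ) (q:ℕ) t
        push_cast at key ⊢
        rw [show ((-1:ℂ))^((n:ℕ)+2) = (-1:ℂ)^((n:ℕ)) by rw [pow_add]; ring]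
        field_simp
        linear_combination (-1:ℂ) * key
      rw [hg]
      conv_rhs => rw [map_mul, map_mul]
      ring
    · rw [if_neg hc, if_neg (by push_cast; omega)]
      simp
  · rw [if_neg h, if_neg h, mul_zero, sub_zero]
    refine (Finset.sum_eq_zero fun q _ => ?_).symm
    rw [if_neg (by push_cast; omega), zero_mul]

end
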